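/- Let U and V be finite nonempty sets of vectors in ℝ^n. Then the inequality min_{u∈U} ⟨u,x⟩ ≥ min_{v∈V} ⟨v,x⟩ holds for all x ∈ ℝ^n with nonnegative coordinates if and only if for every u ∈ U there exists a vector c in the convex hull of V with u ≥ c componentwise. -/

import Mathlib

/-- `min_{u∈U} ⟨u,x⟩ ≥ min_{v∈V} ⟨v,x⟩` for all nonnegative `x` iff every `u ∈ U`
dominates some point of the convex hull of `V`. -/
theorem stmt8 (n : ℕ) (U V : Finset (Fin n → ℝ)) (hU : U.Nonempty) (hV : V.Nonempty) :
    (∀ x : Fin n → ℝ, (∀ i, 0 ≤ x i) →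
      V.inf' hV (fun v => ∑ i, v i * x i) ≤ U.inf' hU (fun u => ∑ i, u i * x i)) ↔
    ∀ u ∈ U, ∃ c ∈ convexHull ℝ (V : Set (Fin n → ℝ)), ∀ i, c i ≤ u i := by
  constructor
  · intro h u hu
    by_contra hc
    push_neg at hc
    set A : Set (Fin n → ℝ) := {y | ∀ i, y i ≤ u i} with hA
    set B : Set (Fin n → ℝ) := convexHull ℝ (V : Set (Fin n → ℝ)) with hB
    have hAclosed : IsClosed A := by
      have : A = ⋂ i, {y : Fin n → ℝ | y i ≤ u i} := by
        ext y; simp [hA]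
      rw [this]
      exact isClosed_iInter fun i => isClosed_le (continuous_apply i) continuous_const
    have hAconv : Convex ℝ A := by
      intro y hy z hz a b ha hb hab i
      simp only [Pi.add_apply, Pi.smul_apply, smul_eq_mul]
      calc a * y i + b * z i ≤ a * u i + b * u i := by nlinarith [hy i, hz i]
        _ = u i := by rw [← add_mul, hab, one_mul]
    have hBconv : Convex ℝ B := convex_convexHull ℝ _
    have hBcomp : IsCompact B := (V.finite_toSet).isCompact_convexHull ℝ
    have hdisj : Disjoint A B := by
      rw [Set.disjoint_left]
      intro c hcA hcB
      obtain ⟨i, hi⟩ := hc c hcB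
      exact absurd (hcA i) (not_le.mpr hi)
    obtain ⟨f, a, b, hfa, hab, hfb⟩ :=
      geometric_hahn_banach_closed_compact hAconv hAclosed hBconv hBcomp hdisj
    set x : Fin n → ℝ := fun i => f (fun j => if i = j then 1 else 0) with hx
    have key : ∀ y : Fin n → ℝ, f y = ∑ i, y i * x i := by
      intro y
      nth_rewrite 1 [pi_eq_sum_univ y]
      rw [map_sum]
      exact Finset.sum_congr rfl fun i _ => by rw [map_smul, smul_eq_mul]
    have hxnn : ∀ i, 0 ≤ x i := by
      intro i
      by_contra hxi
      push_neg at hxi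
      set t : ℝ := (f u - a) / x i with ht
      have hfu : f u < a := hfa u (fun j => le_refl _)
      have htnn : 0 ≤ t := by
        exact div_nonneg_iff.mpr (Or.inr ⟨by linarith, le_of_lt hxi⟩)
      have hmem : u - t • (fun j => if i = j then (1:ℝ) else 0) ∈ A := by
        intro j
        simp only [Pi.sub_apply, Pi.smul_apply, smul_eq_mul]
        by_cases hij : i = j <;> simp [hij] <;> nlinarith
      have := hfa _ hmem
      rw [map_sub, map_smul, smul_eq_mul] at this
      have hxeq : f (fun j => if i = j then (1:ℝ) else 0) = x i := rfl
      rw [hxeq, ht] at this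
      rw [div_mul_cancel₀ _ (ne_of_lt hxi)] at this
      linarith
    have hVb : b ≤ V.inf' hV (fun v => ∑ i, v i * x i) := by
      apply Finset.le_inf'
      intro v hv
      have : b < f v := hfb v (subset_convexHull ℝ _ hv)
      rw [key v] at this
      linarith
    have hU' : U.inf' hU (fun u => ∑ i, u i * x i) ≤ ∑ i, u i * x i :=
      Finset.inf'_le _ hu
    have hfu : f u < a := hfa u (fun j => le_refl _)
    rw [key u] at hfu
    have := h x hxnn
    linarith
  · intro h x hx
    apply Finset.le_inf'
    intro u hu
    obtain ⟨c, hcV, hcu⟩ := h u hu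
    have h1 : ∑ i, c i * x i ≤ ∑ i, u i * x i := by
      apply Finset.sum_le_sum
      intro i _
      exact mul_le_mul_of_nonneg_right (hcu i) (hx i)
    have h2 : V.inf' hV (fun v => ∑ i, v i * x i) ≤ ∑ i, c i * x i := by
      set m := V.inf' hV (fun v => ∑ i, v i * x i) with hm
      have hsub : (V : Set (Fin n → ℝ)) ⊆ {y | m ≤ ∑ i, y i * x i} := by
        intro v hv
        simp only [Set.mem_setOf_eq, hm]
        exact Finset.inf'_le _ hv
      have hconv : Convex ℝ {y : Fin n → ℝ | m ≤ ∑ i, y i * x i} := by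
        apply convex_halfSpace_ge
        exact { map_add := fun y z => by simp [add_mul, Finset.sum_add_distrib]
                map_smul := fun c y => by
                  simp [Finset.mul_sum, mul_assoc] }
      exact convexHull_min hsub hconv hcV
    linarith
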